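/- Theorem 3 (general sampling design, non-asymptotic form): Suppose λ ≤ π_k for every k ∈ U with λ > 0, |y_k| ≤ C for every k ∈ U, |π_{kl} − π_k π_l| ≤ M for all k ≠ l, and a ≤ 1/(K+1). Then E[(N⁻¹ t̂_IHT − N⁻¹ t_y)²] ≤ E[(N⁻¹ t̂_HT − N⁻¹ t_y)²] + (K² + 2K(N − K)) M C² / (λ² N²). -/

import Mathlib

open MeasureTheory

open MeasureTheory

lemma expand_sq {Ω : Type*} [MeasurableSpace Ω] (μ : Measure Ω) [IsProbabilityMeasure μ]
    {N : ℕ} (I : Fin N → Ω → ℝ)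
    (hIint : ∀ k, Integrable (I k) μ)
    (hIint2 : ∀ k l, Integrable (fun ω => I k ω * I l ω) μ)
    (v b : Fin N → ℝ) :
    ∫ ω, (∑ k, (I k ω - b k) * v k) ^ 2 ∂μ
      = ∑ k, ∑ l, v k * v l *
          ((∫ ω, I k ω * I l ω ∂μ) - b k * (∫ ω, I l ω ∂μ) - b l * (∫ ω, I k ω ∂μ)
            + b k * b l) := by
  have hint : ∀ k l : Fin N, Integrable
      (fun ω => (v k * v l) * (I k ω * I l ω) - (v k * v l * b k) * I l ω
        - (v k * v l * b l) * I k ω + (v k * v l * b k * b l)) μ := by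
    intro k l
    exact ((((hIint2 k l).const_mul _).sub ((hIint l).const_mul _)).sub
      ((hIint k).const_mul _)).add (integrable_const _)
  have h1 : ∀ ω, (∑ k, (I k ω - b k) * v k) ^ 2
      = ∑ k : Fin N, ∑ l : Fin N, ((v k * v l) * (I k ω * I l ω) - (v k * v l * b k) * I l ω
        - (v k * v l * b l) * I k ω + (v k * v l * b k * b l)) := by
    intro ω
    rw [sq, Finset.sum_mul_sum]
    refine Finset.sum_congr rfl fun k _ => Finset.sum_congr rfl fun l _ => by ring
  simp only [h1]
  rw [integral_finset_sum _ (fun k _ => integrable_finset_sum _ (fun l _ => hint k l))]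
  refine Finset.sum_congr rfl fun k _ => ?_
  rw [integral_finset_sum _ (fun l _ => hint k l)]
  refine Finset.sum_congr rfl fun l _ => ?_
  rw [integral_add, integral_sub, integral_sub, integral_const_mul _ _, integral_const_mul _ _,
    integral_const_mul _ _, integral_const]
  · simp [measure_univ]; ring
  · exact (hIint2 k l).const_mul _
  · exact (hIint l).const_mul _
  · exact ((hIint2 k l).const_mul _).sub ((hIint l).const_mul _)
  · exact (hIint k).const_mul _
  · exact (((hIint2 k l).const_mul _).sub ((hIint l).const_mul _)).sub ((hIint k).const_mul _)
  · exact integrable_const _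

lemma scalar_key (K : ℕ) (a p : ℝ) (hp : 0 < p) (hpa : p ≤ a)
    (ha : 0 < a) (haK : a * ((K : ℝ) + 1) ≤ 1) :
    ((K : ℝ) - 1) * (p / a - 1) ^ 2 + (p / a ^ 2 - 2 * p / a - 1 / p + 2) ≤ 0 := by
  have hKp : p * ((K : ℝ) + 1) ≤ 1 :=
    le_trans (by nlinarith [Nat.cast_nonneg (α := ℝ) K]) haK
  have hp1 : p ≤ 1 := by nlinarith [Nat.cast_nonneg (α := ℝ) K]
  have hfac : ((K : ℝ) - 1) * p * (a - p) + 2 * p * a - p - a ≤ 0 := by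
    nlinarith [mul_le_mul_of_nonneg_right (show (K : ℝ) * p ≤ 1 - p by nlinarith)
      (sub_nonneg.2 hpa)]
  have heq : ((K : ℝ) - 1) * (p / a - 1) ^ 2 + (p / a ^ 2 - 2 * p / a - 1 / p + 2)
      = ((a - p) * (((K : ℝ) - 1) * p * (a - p) + 2 * p * a - p - a)) / (p * a ^ 2) := by
    field_simp
    ring
  rw [heq]
  exact div_nonpos_of_nonpos_of_nonneg
    (mul_nonpos_of_nonneg_of_nonpos (sub_nonneg.2 hpa) hfac)
    (by positivity)


set_option maxHeartbeats 1000000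

theorem iht_le_ht_general
    {Ω : Type*} [MeasurableSpace Ω] (μ : Measure Ω) [IsProbabilityMeasure μ]
    (N : ℕ) (y : Fin N → ℝ) (I : Fin N → Ω → ℝ)
    (hI01 : ∀ k, ∀ ω, I k ω = 0 ∨ I k ω = 1)
    (hIint : ∀ k, Integrable (I k) μ)
    (hIint2 : ∀ k l, Integrable (fun ω => I k ω * I l ω) μ)
    (π : Fin N → ℝ)
    (hπ : ∀ k, π k = ∫ ω, I k ω ∂μ)
    (hπmem : ∀ k, π k ∈ Set.Ioc (0 : ℝ) 1)
    (π2 : Fin N → Fin N → ℝ)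
    (hπ2 : ∀ k l, k ≠ l → π2 k l = ∫ ω, I k ω * I l ω ∂μ)
    (a : ℝ) (ha : a ∈ Set.Ioc (0 : ℝ) 1)
    (U2 : Finset (Fin N)) (K : ℕ) (hK : U2.card = K)
    (hU2 : ∀ k ∈ U2, π k ≤ a)
    (haK : a ≤ 1 / ((K : ℝ) + 1))
    (πs : Fin N → ℝ)
    (hπs : ∀ k, πs k = if k ∈ U2 then a else π k)
    (lam : ℝ) (hlam : 0 < lam) (hlamπ : ∀ k, lam ≤ π k)
    (C : ℝ) (hC : 0 < C) (hy : ∀ k, |y k| ≤ C)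
    (M : ℝ) (hM : 0 ≤ M)
    (hΔ : ∀ k l, k ≠ l → |π2 k l - π k * π l| ≤ M) :
    (∫ ω, ((N : ℝ)⁻¹ * (∑ k, I k ω * y k / πs k) - (N : ℝ)⁻¹ * ∑ k, y k) ^ 2 ∂μ)
      ≤ (∫ ω, ((N : ℝ)⁻¹ * (∑ k, I k ω * y k / π k) - (N : ℝ)⁻¹ * ∑ k, y k) ^ 2 ∂μ)
        + ((K : ℝ) ^ 2 + 2 * K * (N - K)) * M * C ^ 2 / (lam ^ 2 * N ^ 2) := by
  classical
  rcases Nat.eq_zero_or_pos N with hN0 | hNpos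
  · subst hN0
    have hK0 : K = 0 := by rw [← hK, Finset.eq_empty_of_isEmpty U2]; rfl
    subst hK0
    simp
  have hNR : (0 : ℝ) < N := by exact_mod_cast hNpos
  have hπpos : ∀ k, 0 < π k := fun k => (hπmem k).1
  have hπsp : ∀ k, 0 < πs k := by
    intro k; rw [hπs]; split_ifs; exacts [ha.1, hπpos k]
  have hπleπs : ∀ k, π k ≤ πs k := by
    intro k; rw [hπs]; split_ifs with h; exacts [hU2 k h, le_refl _]
  have hlamπs : ∀ k, lam ≤ πs k := fun k => le_trans (hlamπ k) (hπleπs k)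
  have hmm : ∀ k l : Fin N, (∫ ω, I k ω * I l ω ∂μ) = (if k = l then π k else π2 k l) := by
    intro k l
    by_cases h : k = l
    · subst h
      rw [if_pos rfl, hπ]
      congr 1; funext ω
      rcases hI01 k ω with h | h <;> simp [h]
    · rw [if_neg h, hπ2 k l h]
  -- main expansion for any positive weight function b
  have key : ∀ b : Fin N → ℝ, (∀ k, 0 < b k) →
      ∫ ω, ((N : ℝ)⁻¹ * (∑ k, I k ω * y k / b k) - (N : ℝ)⁻¹ * ∑ k, y k) ^ 2 ∂μ
        = ((N : ℝ)⁻¹) ^ 2 * ∑ k, ∑ l, (y k / b k) * (y l / b l) *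
            ((if k = l then π k else π2 k l) - b k * π l - b l * π k + b k * b l) := by
    intro b hb
    have h1 : ∀ ω, ((N : ℝ)⁻¹ * (∑ k, I k ω * y k / b k) - (N : ℝ)⁻¹ * ∑ k, y k) ^ 2
        = ((N : ℝ)⁻¹) ^ 2 * (∑ k, (I k ω - b k) * (y k / b k)) ^ 2 := by
      intro ω
      have h2 : ∑ k, (I k ω - b k) * (y k / b k)
          = (∑ k, I k ω * y k / b k) - ∑ k, y k := by
        rw [← Finset.sum_sub_distrib]
        refine Finset.sum_congr rfl fun k _ => ?_
        have := (hb k).ne'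
        field_simp
      rw [h2]; ring
    simp only [h1]
    rw [integral_const_mul, expand_sq μ I hIint hIint2 (fun k => y k / b k) b]
    simp only [hmm, ← hπ]
  rw [key πs hπsp, key π hπpos]

  -- local definitions
  set T : ℝ := (lam ^ 2)⁻¹ * (M * C ^ 2) with hT
  set ε : Fin N → ℝ := fun k => π k / πs k - 1 with hεdef
  set sf : Fin N → ℝ := fun k => y k * ε k with hsfdef
  set W : Fin N × Fin N → ℝ := fun p =>
    ((πs p.1 * πs p.2)⁻¹ - (π p.1 * π p.2)⁻¹) * (π2 p.1 p.2 - π p.1 * π p.2)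
      * (y p.1 * y p.2) with hWdef
  set D : Fin N → Fin N → ℝ := fun k l =>
    (y k / πs k) * (y l / πs l) *
        ((if k = l then π k else π2 k l) - πs k * π l - πs l * π k + πs k * πs l)
      - (y k / π k) * (y l / π l) *
        ((if k = l then π k else π2 k l) - π k * π l - π l * π k + π k * π l) with hDdef
  have hε0 : ∀ k, k ∉ U2 → ε k = 0 := by
    intro k hk
    have e : πs k = π k := by rw [hπs]; simp [hk]
    rw [hεdef]
    simp [e, div_self (hπpos k).ne']
  have hπsa : ∀ k ∈ U2, πs k = a := by
    intro k hk; rw [hπs]; simp [hk]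
  have hD0 : ∀ k, k ∉ U2 → D k k = 0 := by
    intro k hk
    have e : πs k = π k := by rw [hπs]; simp [hk]
    simp only [hDdef, e]
    ring
  have hDoff : ∀ k l, k ≠ l → D k l = W (k, l) + sf k * sf l := by
    intro k l hkl
    simp only [hDdef, hWdef, hsfdef, hεdef, if_neg hkl]
    have h1 := (hπsp k).ne'
    have h2 := (hπsp l).ne'
    have h3 := (hπpos k).ne'
    have h4 := (hπpos l).ne'
    field_simp
    ring
  have hterm : ∀ k ∈ U2, ((K : ℝ) - 1) * (sf k) ^ 2 + D k k ≤ 0 := by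
    intro k hk
    have ea : πs k = a := hπsa k hk
    have h3 := (hπpos k).ne'
    have h4 := ha.1.ne'
    have h1 : ((K : ℝ) - 1) * (sf k) ^ 2 + D k k
        = y k ^ 2 * (((K : ℝ) - 1) * (π k / a - 1) ^ 2
            + (π k / a ^ 2 - 2 * π k / a - 1 / π k + 2)) := by
      simp only [hsfdef, hεdef, hDdef, ea, if_pos rfl, ↓reduceIte]
      field_simp
      ring
    rw [h1]
    refine mul_nonpos_of_nonneg_of_nonpos (sq_nonneg _)
      (scalar_key K a (π k) (hπpos k) (hU2 k hk) ha.1 ?_)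
    exact (le_div_iff₀ (by positivity)).1 haK
  have hsum_sf : ∑ k, sf k = ∑ k ∈ U2, sf k :=
    (Finset.sum_subset (Finset.subset_univ U2)
      (fun k _ hk => by rw [hsfdef]; simp [hε0 k hk])).symm
  have hsum_sf2 : ∑ k, sf k ^ 2 = ∑ k ∈ U2, sf k ^ 2 :=
    (Finset.sum_subset (Finset.subset_univ U2)
      (fun k _ hk => by rw [hsfdef]; simp [hε0 k hk])).symm
  have hsum_D : ∑ k, D k k = ∑ k ∈ U2, D k k :=
    (Finset.sum_subset (Finset.subset_univ U2) (fun k _ hk => hD0 k hk)).symm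
  have hA : (∑ k, sf k) ^ 2 - (∑ k, sf k ^ 2) + ∑ k, D k k ≤ 0 := by
    rw [hsum_sf, hsum_sf2, hsum_D]
    have hcs : (∑ k ∈ U2, sf k) ^ 2 ≤ (K : ℝ) * ∑ k ∈ U2, sf k ^ 2 := by
      have := sq_sum_le_card_mul_sum_sq (s := U2) (f := sf)
      simpa [hK] using this
    have hP : ∑ k ∈ U2, (((K : ℝ) - 1) * sf k ^ 2 + D k k) ≤ 0 :=
      Finset.sum_nonpos (fun k hk => hterm k hk)
    have heq : ∑ k ∈ U2, (((K : ℝ) - 1) * sf k ^ 2 + D k k)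
        = ((K : ℝ) - 1) * (∑ k ∈ U2, sf k ^ 2) + ∑ k ∈ U2, D k k := by
      rw [Finset.sum_add_distrib, Finset.mul_sum]
    nlinarith [hcs, hP, heq]
  have hWzero : ∀ p : Fin N × Fin N, p.1 ∉ U2 → p.2 ∉ U2 → W p = 0 := by
    intro p h1 h2
    have e1 : πs p.1 = π p.1 := by rw [hπs]; simp [h1]
    have e2 : πs p.2 = π p.2 := by rw [hπs]; simp [h2]
    rw [hWdef]
    simp [e1, e2]
  have hWb : ∀ p ∈ (Finset.univ : Finset (Fin N)).offDiag, |W p| ≤ T := by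
    intro p hp
    obtain ⟨-, -, hne⟩ := Finset.mem_offDiag.1 hp
    have i1 : (πs p.1 * πs p.2)⁻¹ ≤ (lam ^ 2)⁻¹ := by
      apply inv_anti₀ (by positivity)
      rw [sq]
      exact mul_le_mul (hlamπs p.1) (hlamπs p.2) hlam.le (hπsp p.1).le
    have i2 : (π p.1 * π p.2)⁻¹ ≤ (lam ^ 2)⁻¹ := by
      apply inv_anti₀ (by positivity)
      rw [sq]
      exact mul_le_mul (hlamπ p.1) (hlamπ p.2) hlam.le (hπpos p.1).le
    have i3 : (0 : ℝ) < (πs p.1 * πs p.2)⁻¹ := inv_pos.2 (mul_pos (hπsp _) (hπsp _))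
    have i4 : (0 : ℝ) < (π p.1 * π p.2)⁻¹ := inv_pos.2 (mul_pos (hπpos _) (hπpos _))
    have h1 : |(πs p.1 * πs p.2)⁻¹ - (π p.1 * π p.2)⁻¹| ≤ (lam ^ 2)⁻¹ := by
      rw [abs_le]; constructor <;> linarith
    have h2 := hΔ p.1 p.2 hne
    have h3 : |y p.1 * y p.2| ≤ C * C := by
      rw [abs_mul]
      exact mul_le_mul (hy _) (hy _) (abs_nonneg _) hC.le
    rw [hWdef]
    calc |((πs p.1 * πs p.2)⁻¹ - (π p.1 * π p.2)⁻¹) * (π2 p.1 p.2 - π p.1 * π p.2)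
          * (y p.1 * y p.2)|
        = |(πs p.1 * πs p.2)⁻¹ - (π p.1 * π p.2)⁻¹| * |π2 p.1 p.2 - π p.1 * π p.2|
          * |y p.1 * y p.2| := by rw [abs_mul, abs_mul]
      _ ≤ (lam ^ 2)⁻¹ * M * (C * C) := by
          refine mul_le_mul (mul_le_mul h1 h2 (abs_nonneg _) (by positivity))
            h3 (abs_nonneg _) (by positivity)
      _ = T := by rw [hT]; ring
  have hKN : K ≤ N := by
    rw [← hK]
    simpa using Finset.card_le_univ U2
  have hcount : (((Finset.univ : Finset (Fin N)).offDiag.filter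
        (fun p => p.1 ∈ U2 ∨ p.2 ∈ U2)).card : ℝ)
      ≤ (K : ℝ) ^ 2 + 2 * K * ((N : ℝ) - K) := by
    have hsub : (Finset.univ : Finset (Fin N)).offDiag.filter
          (fun p => p.1 ∈ U2 ∨ p.2 ∈ U2)
        ⊆ (U2 ×ˢ U2) ∪ (U2 ×ˢ U2ᶜ) ∪ (U2ᶜ ×ˢ U2) := by
      intro p hp
      obtain ⟨-, hor⟩ := Finset.mem_filter.1 hp
      simp only [Finset.mem_union, Finset.mem_product, Finset.mem_compl]
      by_cases h1 : p.1 ∈ U2 <;> by_cases h2 : p.2 ∈ U2 <;> tauto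
    have hc1 : ((U2 ×ˢ U2) ∪ (U2 ×ˢ U2ᶜ) ∪ (U2ᶜ ×ˢ U2)).card
        ≤ K * K + K * (N - K) + (N - K) * K := by
      refine le_trans (Finset.card_union_le _ _) ?_
      refine le_trans (add_le_add_left (Finset.card_union_le _ _) _) ?_
      simp [Finset.card_product, Finset.card_compl, hK, Fintype.card_fin]
    have hcard := le_trans (Finset.card_le_card hsub) hc1
    calc (((Finset.univ : Finset (Fin N)).offDiag.filter
          (fun p => p.1 ∈ U2 ∨ p.2 ∈ U2)).card : ℝ)
        ≤ ((K * K + K * (N - K) + (N - K) * K : ℕ) : ℝ) := by exact_mod_cast hcard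
      _ = (K : ℝ) * K + (K : ℝ) * ((N : ℝ) - K) + ((N : ℝ) - K) * K := by
          push_cast [Nat.cast_sub hKN]; ring
      _ ≤ (K : ℝ) ^ 2 + 2 * K * ((N : ℝ) - K) := le_of_eq (by ring)
  have hTnn : (0 : ℝ) ≤ T := by rw [hT]; positivity
  have hB : ∑ p ∈ (Finset.univ : Finset (Fin N)).offDiag, W p
      ≤ ((K : ℝ) ^ 2 + 2 * K * ((N : ℝ) - K)) * T := by
    have h0 : ∑ p ∈ (Finset.univ : Finset (Fin N)).offDiag.filter
          (fun p => p.1 ∈ U2 ∨ p.2 ∈ U2), W p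
        = ∑ p ∈ (Finset.univ : Finset (Fin N)).offDiag, W p :=
      Finset.sum_filter_of_ne (fun p _ hne0 => by
        by_contra hc
        push_neg at hc
        exact hne0 (hWzero p hc.1 hc.2))
    rw [← h0]
    calc ∑ p ∈ (Finset.univ : Finset (Fin N)).offDiag.filter
          (fun p => p.1 ∈ U2 ∨ p.2 ∈ U2), W p
        ≤ ∑ p ∈ (Finset.univ : Finset (Fin N)).offDiag.filter
          (fun p => p.1 ∈ U2 ∨ p.2 ∈ U2), |W p| :=
          Finset.sum_le_sum (fun p _ => le_abs_self _)
      _ ≤ ((Finset.univ : Finset (Fin N)).offDiag.filter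
          (fun p => p.1 ∈ U2 ∨ p.2 ∈ U2)).card • T :=
          Finset.sum_le_card_nsmul _ _ _
            (fun p hp => hWb p (Finset.mem_filter.1 hp).1)
      _ = (((Finset.univ : Finset (Fin N)).offDiag.filter
          (fun p => p.1 ∈ U2 ∨ p.2 ∈ U2)).card : ℝ) * T := nsmul_eq_mul _ _
      _ ≤ ((K : ℝ) ^ 2 + 2 * K * ((N : ℝ) - K)) * T :=
          mul_le_mul_of_nonneg_right hcount hTnn
  have hsplitf : ∀ f : Fin N × Fin N → ℝ,
      ∑ p ∈ (Finset.univ ×ˢ Finset.univ : Finset (Fin N × Fin N)), f p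
        = ∑ k, f (k, k) + ∑ p ∈ (Finset.univ : Finset (Fin N)).offDiag, f p := by
    intro f
    rw [← Finset.diag_union_offDiag (Finset.univ : Finset (Fin N)),
      Finset.sum_union (Finset.disjoint_diag_offDiag _), Finset.sum_diag]
  have hcore : (∑ k, ∑ l, (y k / πs k) * (y l / πs l) *
        ((if k = l then π k else π2 k l) - πs k * π l - πs l * π k + πs k * πs l))
      ≤ (∑ k, ∑ l, (y k / π k) * (y l / π l) *
        ((if k = l then π k else π2 k l) - π k * π l - π l * π k + π k * π l))
        + ((K : ℝ) ^ 2 + 2 * K * ((N : ℝ) - K)) * T := by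
    rw [← sub_le_iff_le_add']
    have e1 : (∑ k, ∑ l, (y k / πs k) * (y l / πs l) *
          ((if k = l then π k else π2 k l) - πs k * π l - πs l * π k + πs k * πs l))
        - (∑ k, ∑ l, (y k / π k) * (y l / π l) *
          ((if k = l then π k else π2 k l) - π k * π l - π l * π k + π k * π l))
        = ∑ k, ∑ l, D k l := by
      simp only [hDdef, ← Finset.sum_sub_distrib]
    rw [e1]
    have e2 : ∑ k, ∑ l, D k l
        = ∑ k, D k k + ∑ p ∈ (Finset.univ : Finset (Fin N)).offDiag, D p.1 p.2 := by
      rw [← Finset.sum_product' Finset.univ Finset.univ D]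
      exact hsplitf (fun p => D p.1 p.2)
    rw [e2]
    have e3 : ∑ p ∈ (Finset.univ : Finset (Fin N)).offDiag, D p.1 p.2
        = ∑ p ∈ (Finset.univ : Finset (Fin N)).offDiag, (W p + sf p.1 * sf p.2) :=
      Finset.sum_congr rfl (fun p hp => by
        have := (Finset.mem_offDiag.1 hp).2.2
        rw [hDoff p.1 p.2 this])
    rw [e3, Finset.sum_add_distrib]
    have h5 : ∑ p ∈ (Finset.univ ×ˢ Finset.univ : Finset (Fin N × Fin N)),
        sf p.1 * sf p.2 = (∑ k, sf k) ^ 2 := by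
      rw [Finset.sum_product' Finset.univ Finset.univ (fun k l => sf k * sf l), sq,
        Finset.sum_mul_sum]
    have e4 : ∑ p ∈ (Finset.univ : Finset (Fin N)).offDiag, sf p.1 * sf p.2
        = (∑ k, sf k) ^ 2 - ∑ k, sf k ^ 2 := by
      have h6 := hsplitf (fun p => sf p.1 * sf p.2)
      have h7 : ∑ k, sf k * sf k = ∑ k, sf k ^ 2 :=
        Finset.sum_congr rfl (fun k _ => (sq (sf k)).symm ▸ (pow_two (sf k)).symm)
      simp only at h6
      rw [h5] at h6
      rw [h7] at h6
      linarith
    rw [e4]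
    linarith [hA, hB]
  refine le_trans (mul_le_mul_of_nonneg_left hcore
    (by positivity : (0 : ℝ) ≤ ((N : ℝ)⁻¹) ^ 2)) ?_
  rw [mul_add]
  have hfin : ((N : ℝ)⁻¹) ^ 2 * (((K : ℝ) ^ 2 + 2 * K * ((N : ℝ) - K)) * T)
      = ((K : ℝ) ^ 2 + 2 * K * ((N : ℝ) - K)) * M * C ^ 2 / (lam ^ 2 * N ^ 2) := by
    rw [hT]
    field_simp
  rw [hfin]
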